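/- Let H be an almost-breakable monoid. Then every element of 𝒫fin,1(H) admits a square-free factorization into irreducibles, i.e. a factorization whose factors are pairwise distinct (the empty factorization for {1_H}). -/

import Mathlib

open scoped Pointwise

section Defs

variable {M : Type*} [Monoid M]

/-- `x` divides `y` (two-sidedly) in a monoid: `y = u * x * v` for some `u v`. -/
def dvdTS (x y : M) : Prop := ∃ u v : M, y = u * x * v

/-- A non-unit-divisor: an element that does not divide `1`. -/
def isNonUnitDivisor (x : M) : Prop := ¬ dvdTS x 1

/-- `x` properly divides `y`: `x` divides `y` but `y` does not divide `x`. -/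
def properDvdTS (x y : M) : Prop := dvdTS x y ∧ ¬ dvdTS y x

/-- An irreducible: a non-unit-divisor `a` with `a ≠ x * y` whenever `x, y` are
non-unit-divisors properly dividing `a`. -/
def isIrred (a : M) : Prop :=
  isNonUnitDivisor a ∧
    ∀ x y : M, isNonUnitDivisor x → isNonUnitDivisor y →
      properDvdTS x a → properDvdTS y a → a ≠ x * y

/-- An atom: a non-unit-divisor that is not a product of two non-unit-divisors. -/
def isAtomTS (a : M) : Prop :=
  isNonUnitDivisor a ∧ ∀ x y : M, isNonUnitDivisor x → isNonUnitDivisor y → a ≠ x * y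

/-- A quark: a non-unit-divisor not properly divided by any non-unit-divisor. -/
def isQuarkTS (a : M) : Prop :=
  isNonUnitDivisor a ∧ ∀ x : M, isNonUnitDivisor x → ¬ properDvdTS x a

/-- A factorization of `x` into irreducibles, recorded as a list. -/
def IsFactorization (l : List M) (x : M) : Prop :=
  (∀ a ∈ l, isIrred a) ∧ l.prod = x

/-- A minimal factorization: a factorization of `x` such that no product, in any order,
of a proper sub-multiset of its factors equals `x`. -/
def IsMinimalFactorization (l : List M) (x : M) : Prop :=
  IsFactorization l x ∧
    ∀ l' : List M, (↑l' : Multiset M) < (↑l : Multiset M) → l'.prod ≠ x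

end Defs

/-- A unique minimal factorization (UmF) monoid: every non-identity element has a minimal
factorization into irreducibles, unique up to permutation of the factors. -/
def IsUmF (M : Type*) [Monoid M] : Prop :=
  (∀ x : M, x ≠ 1 → ∃ l : List M, IsMinimalFactorization l x) ∧
    ∀ x : M, ∀ l l' : List M,
      IsMinimalFactorization l x → IsMinimalFactorization l' x → l.Perm l'

/-- The reduced finitary power monoid `𝒫fin,1(H)` of a monoid `H`: the submonoid of
`Finset H` (under pointwise multiplication) of finite subsets containing `1`. -/
def redPow (H : Type*) [Monoid H] [DecidableEq H] : Submonoid (Finset H) where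
  carrier := {X : Finset H | (1 : H) ∈ X}
  one_mem' := by simp
  mul_mem' := by
    intro X Y hX hY
    simpa using Finset.mul_mem_mul hX hY


section Aux

variable {H : Type*} [Monoid H] [DecidableEq H]

lemma mem_redPow_iff {X : Finset H} : X ∈ redPow H ↔ (1 : H) ∈ X := Iff.rfl

lemma one_mem_coe (X : redPow H) : (1 : H) ∈ (X : Finset H) := X.2

/-- The pair `{1, x}` as an element of `redPow H`. -/
def rpPair (x : H) : redPow H := ⟨{1, x}, Finset.mem_insert_self 1 {x}⟩

/-- `insert 1 S` as an element of `redPow H`. -/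
def rpIns (S : Finset H) : redPow H := ⟨insert 1 S, Finset.mem_insert_self 1 S⟩

lemma coe_mul_redPow (A B : redPow H) :
    ((A * B : redPow H) : Finset H) = (A : Finset H) * (B : Finset H) := rfl

lemma dvdTS_self {M : Type*} [Monoid M] (a : M) : dvdTS a a := ⟨1, 1, by simp⟩

lemma sub_of_dvd {A B : redPow H} (h : dvdTS A B) : (A : Finset H) ⊆ (B : Finset H) := by
  obtain ⟨u, v, huv⟩ := h
  intro a ha
  have hco : (B : Finset H) = (u : Finset H) * (A : Finset H) * (v : Finset H) := by
    rw [huv]; rfl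
  rw [hco]
  have := Finset.mul_mem_mul (Finset.mul_mem_mul (one_mem_coe u) ha) (one_mem_coe v)
  simpa using this

lemma rpPair_irred {x : H} (hx : x ≠ 1) : isIrred (rpPair x) := by
  constructor
  · rintro ⟨u, v, h⟩
    have h' : dvdTS (rpPair x) (1 : redPow H) := ⟨u, v, h⟩
    have hsub := sub_of_dvd h'
    have hxmem : x ∈ ((1 : redPow H) : Finset H) :=
      hsub (by simp [rpPair])
    have : x ∈ ({1} : Finset H) := by simpa using hxmem
    exact hx (Finset.mem_singleton.mp this)
  · intro Y Z hY _ hPY _ _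
    obtain ⟨hYd, hnYd⟩ := hPY
    have hsub := sub_of_dvd hYd
    by_cases hY1 : (Y : Finset H) = {1}
    · apply hY
      refine ⟨1, 1, ?_⟩
      have : Y = (1 : redPow H) := Subtype.ext (by rw [hY1]; rfl)
      simp [this]
    · -- Y = rpPair x
      have hYx : Y = rpPair x := by
        apply Subtype.ext
        apply Finset.Subset.antisymm hsub
        intro a ha
        simp only [rpPair, Finset.mem_insert, Finset.mem_singleton] at ha ⊢
        rcases ha with rfl | rfl
        · exact one_mem_coe Y
        · -- show x ∈ Y
          obtain ⟨y, hyY, hy1⟩ : ∃ y ∈ (Y : Finset H), y ≠ 1 := by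
            by_contra hc
            push_neg at hc
            apply hY1
            apply Finset.Subset.antisymm
            · intro a haY
              simp [hc a haY]
            · intro a haY
              simp only [Finset.mem_singleton] at haY
              subst haY
              exact one_mem_coe Y
          have := hsub hyY
          simp only [rpPair, Finset.mem_insert, Finset.mem_singleton] at this
          rcases this with rfl | rfl
          · exact absurd rfl hy1
          · exact hyY
      exact absurd (hYx ▸ dvdTS_self (rpPair x)) hnYd

section WithHab

variable (hab : ∀ x y : H, (x * y = x ∨ x * y = y) ∨ (y * x = x ∨ y * x = y))
include hab

lemma hab_idem (x : H) : x * x = x := by have := hab x x; tauto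

lemma hab_ge_trans' {x y z : H} (h1 : x * y = x ∨ y * x = x) (h2 : y * z = y ∨ z * y = y) :
    x * z = x ∨ z * x = x := by
  rcases h1 with h1 | h1 <;> rcases h2 with h2 | h2
  · left
    calc x * z = (x * y) * z := by rw [h1]
    _ = x * (y * z) := mul_assoc ..
    _ = x * y := by rw [h2]
    _ = x := h1
  · rcases hab x z with (h | h) | (h | h)
    · exact Or.inl h
    · -- x * z = z : derive x = y
      have hxy : x = y := by
        calc x = x * y := h1.symm
        _ = x * (z * y) := by rw [h2]
        _ = (x * z) * y := (mul_assoc ..).symm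
        _ = z * y := by rw [h]
        _ = y := h2
      right
      rw [hxy]
      exact h2
    · exact Or.inr h
    · -- z * x = z
      have hzy : z = y := by
        calc z = z * x := h.symm
        _ = z * (x * y) := by rw [h1]
        _ = (z * x) * y := (mul_assoc ..).symm
        _ = z * y := by rw [h]
        _ = y := h2
      left
      rw [hzy, h1]
  · rcases hab x z with (h | h) | (h | h)
    · exact Or.inl h
    · have hzy : z = y := by
        calc z = x * z := h.symm
        _ = (y * x) * z := by rw [h1]
        _ = y * (x * z) := mul_assoc ..
        _ = y * z := by rw [h]
        _ = y := h2
      right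
      rw [hzy, h1]
    · exact Or.inr h
    · -- z * x = z gives y * z = x hence y = x
      have hyzx : y * z = x := by
        calc y * z = y * (z * x) := by rw [h]
        _ = (y * z) * x := (mul_assoc ..).symm
        _ = y * x := by rw [h2]
        _ = x := h1
      have hyx : y = x := by rw [← h2, hyzx]
      left
      rw [← hyx, h2]
  · right
    calc z * x = z * (y * x) := by rw [h1]
    _ = (z * y) * x := (mul_assoc ..).symm
    _ = y * x := by rw [h2]
    _ = x := h1

lemma exists_max (S : Finset H) (hS : S.Nonempty) :
    ∃ x ∈ S, ∀ s ∈ S, x * s = x ∨ s * x = x := by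
  classical
  induction S using Finset.induction_on with
  | empty => exact absurd hS (by simp)
  | @insert a s ha ih =>
    by_cases hs : s.Nonempty
    · obtain ⟨x, hxs, hmax⟩ := ih hs
      have htot : (x * a = x ∨ a * x = x) ∨ (a * x = a ∨ x * a = a) := by
        rcases hab x a with (h | h) | (h | h)
        · exact Or.inl (Or.inl h)
        · exact Or.inr (Or.inr h)
        · exact Or.inl (Or.inr h)
        · exact Or.inr (Or.inl h)
      rcases htot with hxa | hax
      · refine ⟨x, Finset.mem_insert_of_mem hxs, ?_⟩
        intro t ht
        rcases Finset.mem_insert.mp ht with rfl | ht'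
        · exact hxa
        · exact hmax t ht'
      · refine ⟨a, Finset.mem_insert_self a s, ?_⟩
        intro t ht
        rcases Finset.mem_insert.mp ht with rfl | ht'
        · exact Or.inl (hab_idem hab t)
        · exact hab_ge_trans' hab hax (hmax t ht')
    · rw [Finset.not_nonempty_iff_eq_empty] at hs
      subst hs
      refine ⟨a, Finset.mem_insert_self a ∅, ?_⟩
      intro t ht
      rcases Finset.mem_insert.mp ht with rfl | ht'
      · exact Or.inl (hab_idem hab t)
      · exact absurd ht' (Finset.notMem_empty t)

lemma max_good {S : Finset H} {x : H} (hx : ∀ s ∈ S, x * s = x ∨ s * x = x) :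
    (∀ s ∈ S, s * x = s ∨ s * x = x) ∨ (∀ s ∈ S, x * s = s ∨ x * s = x) := by
  by_contra hc
  push_neg at hc
  obtain ⟨⟨a, haS, ha1, ha2⟩, ⟨b, hbS, hb1, hb2⟩⟩ := hc
  have hxa : x * a = x := (hx a haS).resolve_right ha2
  have hbx : b * x = x := (hx b hbS).resolve_left (fun h => hb2 h)
  have hax : a ≠ x := fun h => ha2 (by rw [h, hab_idem hab])
  have hbnex : b ≠ x := fun h => hb2 (by rw [h, hab_idem hab])
  rcases hab a b with (h | h) | (h | h)
  · -- a * b = a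
    apply hb2
    calc x * b = (x * a) * b := by rw [hxa]
    _ = x * (a * b) := mul_assoc ..
    _ = x * a := by rw [h]
    _ = x := hxa
  · -- a * b = b
    apply ha2
    calc a * x = a * (b * x) := by rw [hbx]
    _ = (a * b) * x := (mul_assoc ..).symm
    _ = b * x := by rw [h]
    _ = x := hbx
  · -- b * a = a
    set e := x * b with he
    have hea : e * a = x := by
      calc e * a = x * (b * a) := mul_assoc ..
      _ = x * a := by rw [h]
      _ = x := hxa
    have hene : e ≠ x := hb2
    have hena : e ≠ a := by
      intro h'
      apply hax
      rw [← hea, h', hab_idem hab]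
    have hae : a * e = a ∨ a * e = e := by
      rcases hab a e with (h' | h') | (h' | h')
      · exact Or.inl h'
      · exact Or.inr h'
      · rw [hea] at h'; exact absurd h'.symm hax
      · rw [hea] at h'; exact absurd h'.symm hene
    rcases hae with h' | h'
    · apply ha1
      calc a * x = a * (e * a) := by rw [hea]
      _ = (a * e) * a := (mul_assoc ..).symm
      _ = a * a := by rw [h']
      _ = a := hab_idem hab a
    · apply ha2
      calc a * x = a * (e * a) := by rw [hea]
      _ = (a * e) * a := (mul_assoc ..).symm
      _ = e * a := by rw [h']
      _ = x := hea
  · -- b * a = b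
    set f := a * x with hf
    have hbf : b * f = x := by
      calc b * f = (b * a) * x := (mul_assoc ..).symm
      _ = b * x := by rw [h]
      _ = x := hbx
    have hfne : f ≠ x := ha2
    have hfnb : f ≠ b := by
      intro h'
      apply hbnex
      rw [← hbf, h', hab_idem hab]
    have hfb : f * b = f ∨ f * b = b := by
      rcases hab f b with (h' | h') | (h' | h')
      · exact Or.inl h'
      · exact Or.inr h'
      · rw [hbf] at h'; exact absurd h'.symm hfne
      · rw [hbf] at h'; exact absurd h'.symm hbnex
    rcases hfb with h' | h'
    · apply hb2
      calc x * b = (b * f) * b := by rw [hbf]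
      _ = b * (f * b) := mul_assoc ..
      _ = b * f := by rw [h']
      _ = x := hbf
    · apply hb1
      calc x * b = (b * f) * b := by rw [hbf]
      _ = b * (f * b) := mul_assoc ..
      _ = b * b := by rw [h']
      _ = b := hab_idem hab b

end WithHab

lemma mulR_eq {S' : Finset H} {x : H} (hx : ∀ s ∈ S', s * x = s ∨ s * x = x) :
    (insert 1 S') * ({1, x} : Finset H) = insert 1 (insert x S') := by
  ext a
  simp only [Finset.mem_mul, Finset.mem_insert, Finset.mem_singleton]
  constructor
  · rintro ⟨p, hp, q, hq, rfl⟩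
    rcases hq with rfl | rfl
    · rcases hp with rfl | hp
      · simp
      · simp [hp]
    · rcases hp with rfl | hp
      · simp
      · rcases hx p hp with h | h <;> simp [h, hp]
  · rintro (rfl | rfl | ha)
    · exact ⟨1, Or.inl rfl, 1, Or.inl rfl, mul_one 1⟩
    · exact ⟨1, Or.inl rfl, a, Or.inr rfl, one_mul a⟩
    · exact ⟨a, Or.inr ha, 1, Or.inl rfl, mul_one a⟩

lemma mulL_eq {S' : Finset H} {x : H} (hx : ∀ s ∈ S', x * s = s ∨ x * s = x) :
    ({1, x} : Finset H) * (insert 1 S') = insert 1 (insert x S') := by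
  ext a
  simp only [Finset.mem_mul, Finset.mem_insert, Finset.mem_singleton]
  constructor
  · rintro ⟨p, hp, q, hq, rfl⟩
    rcases hp with rfl | rfl
    · rcases hq with rfl | hq
      · simp
      · simp [hq]
    · rcases hq with rfl | hq
      · simp
      · rcases hx q hq with h | h <;> simp [h, hq]
  · rintro (rfl | rfl | ha)
    · exact ⟨1, Or.inl rfl, 1, Or.inl rfl, mul_one 1⟩
    · exact ⟨a, Or.inr rfl, 1, Or.inl rfl, mul_one a⟩
    · exact ⟨1, Or.inl rfl, a, Or.inr ha, one_mul a⟩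

lemma rpPair_injective : Function.Injective (rpPair (H := H)) := by
  intro x y h
  have h' : ({1, x} : Finset H) = {1, y} := congrArg Subtype.val h
  have hx : x ∈ ({1, y} : Finset H) := h' ▸ (by simp : x ∈ ({1, x} : Finset H))
  have hy : y ∈ ({1, x} : Finset H) := h' ▸ (by simp : y ∈ ({1, y} : Finset H))
  simp only [Finset.mem_insert, Finset.mem_singleton] at hx hy
  rcases hx with rfl | rfl
  · rcases hy with rfl | rfl <;> rfl
  · rfl

lemma main_lemma (hab : ∀ x y : H, (x * y = x ∨ x * y = y) ∨ (y * x = x ∨ y * x = y))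
    (n : ℕ) : ∀ S : Finset H, S.card ≤ n → (1 : H) ∉ S →
    ∃ l : List H, l.Nodup ∧ l.toFinset = S ∧ ((l.map rpPair).prod : redPow H) = rpIns S := by
  induction n with
  | zero =>
    intro S hcard _
    have hS : S = ∅ := Finset.card_eq_zero.mp (Nat.le_zero.mp hcard)
    subst hS
    refine ⟨[], List.nodup_nil, by simp, ?_⟩
    apply Subtype.ext
    simp [rpIns]
    rfl
  | succ n ih =>
    intro S hcard h1S
    by_cases hS : S.Nonempty
    · obtain ⟨x, hxS, hmax⟩ := exists_max hab S hS
      have hgood := max_good hab hmax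
      set S' := S.erase x with hS'
      have h1S' : (1 : H) ∉ S' := fun h => h1S (Finset.mem_of_mem_erase h)
      have hcard' : S'.card ≤ n := by
        have h1 : S'.card = S.card - 1 := by
          rw [hS']; exact Finset.card_erase_of_mem hxS
        have h2 := Finset.card_pos.mpr hS
        omega
      obtain ⟨l, hnd, htf, hprod⟩ := ih S' hcard' h1S'
      have hxnl : x ∉ l := by
        intro h
        have : x ∈ l.toFinset := List.mem_toFinset.mpr h
        rw [htf] at this
        exact Finset.notMem_erase x S this
      have hins : insert x S' = S := Finset.insert_erase hxS
      rcases hgood with hR | hL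
      · refine ⟨l ++ [x], ?_, ?_, ?_⟩
        · simp [List.nodup_append, hnd, hxnl]
          rintro a ha rfl
          exact hxnl ha
        · have h2 : (l ++ [x]).toFinset = insert x S' := by
            rw [List.toFinset_append, htf]
            simp only [List.toFinset_cons, List.toFinset_nil]
            rw [Finset.union_comm, Finset.insert_union, Finset.empty_union]
          rw [h2, hins]
        · rw [List.map_append, List.prod_append]
          simp only [List.map_cons, List.map_nil, List.prod_cons, List.prod_nil, mul_one]
          rw [hprod]
          apply Subtype.ext
          rw [coe_mul_redPow]
          show (insert 1 S') * ({1, x} : Finset H) = insert 1 S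
          rw [mulR_eq (fun s hs => hR s (Finset.mem_of_mem_erase hs)), hins]
      · refine ⟨x :: l, ?_, ?_, ?_⟩
        · simp [hnd, hxnl]
        · simp only [List.toFinset_cons, htf]
          exact hins
        · rw [List.map_cons, List.prod_cons, hprod]
          apply Subtype.ext
          rw [coe_mul_redPow]
          show ({1, x} : Finset H) * (insert 1 S') = insert 1 S
          rw [mulL_eq (fun s hs => hL s (Finset.mem_of_mem_erase hs)), hins]
    · rw [Finset.not_nonempty_iff_eq_empty] at hS
      subst hS
      refine ⟨[], List.nodup_nil, by simp, ?_⟩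
      apply Subtype.ext
      simp [rpIns]
      rfl

end Aux
theorem stmt_15 {H : Type*} [Monoid H] [DecidableEq H]
    (hab : ∀ x y : H, (x * y = x ∨ x * y = y) ∨ (y * x = x ∨ y * x = y))
    (X : redPow H) :
    ∃ l : List (redPow H), IsFactorization l X ∧ l.Nodup := by
  classical
  set S : Finset H := (X : Finset H).erase 1 with hSdef
  have h1S : (1 : H) ∉ S := Finset.notMem_erase 1 _
  obtain ⟨l, hnd, htf, hprod⟩ := main_lemma hab S.card S le_rfl h1S
  refine ⟨l.map rpPair, ⟨?_, ?_⟩, ?_⟩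
  · intro a ha
    obtain ⟨s, hs, rfl⟩ := List.mem_map.mp ha
    have hsS : s ∈ S := by rw [← htf]; exact List.mem_toFinset.mpr hs
    exact rpPair_irred (Finset.ne_of_mem_erase hsS)
  · rw [hprod]
    apply Subtype.ext
    show insert 1 S = (X : Finset H)
    rw [hSdef]
    exact Finset.insert_erase (one_mem_coe X)
  · exact List.Nodup.map rpPair_injective hnd
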